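/- Let M be a compact connected metric space equipped with a continuous flow φ. Then φ admits a null-class level-set cross-section if and only if φ is not chain recurrent. (This is the paper's existence theorem in the case of vanishing cohomology class: a null-cohomologous partial cross-section exists iff φ is not chain recurrent.) -/

import Mathlib

/-- An `ε`-chain for the flow `ψ`, with respect to the distance function `d`:
a finite sequence of `n ≥ 1` steps with jump times `τ i ≥ 1`, where each jump
`d (ψ (τ i) (p i)) (p (i+1))` has size `< ε`. -/
def IsChainWith {X : Type*} (ψ : ℝ → X → X) (d : X → X → ℝ) (ε : ℝ) (y z : X) : Prop :=
  ∃ (n : ℕ) (p : ℕ → X) (τ : ℕ → ℝ),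
    1 ≤ n ∧ p 0 = y ∧ p n = z ∧ (∀ i < n, 1 ≤ τ i) ∧
    ∀ i < n, d (ψ (τ i) (p i)) (p (i + 1)) < ε

/-- A point is chain recurrent if for every `ε > 0` there is an `ε`-chain from the
point back to itself. -/
def ChainRecPt {M : Type*} [MetricSpace M] (φ : ℝ → M → M) (x : M) : Prop :=
  ∀ ε : ℝ, 0 < ε → IsChainWith φ dist ε x x

/-- `g` is strictly increasing along the flow `φ` on the set `U`: whenever an orbit
segment stays in `U`, the value of `g` strictly increases along it. -/
def FlowStrictIncrOn {M : Type*} (φ : ℝ → M → M) (g : M → ℝ) (U : Set M) : Prop :=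
  ∀ (x : M) (s s' : ℝ), s < s' → (∀ u ∈ Set.Icc s s', φ u x ∈ U) →
    g (φ s x) < g (φ s' x)

/-- A null-class level-set cross-section of the flow `φ`: a nonempty level set
`g⁻¹ {c}` of a continuous real function which is strictly increasing along the flow
on an open set containing the level set. -/
def IsNullLevelSetCS {M : Type*} [TopologicalSpace M] (φ : ℝ → M → M) (S : Set M) : Prop :=
  S.Nonempty ∧ ∃ (g : M → ℝ) (c : ℝ) (U : Set M),
    Continuous g ∧ S = g ⁻¹' {c} ∧ IsOpen U ∧ S ⊆ U ∧ FlowStrictIncrOn φ g U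


open Set Metric Topology Filter

set_option linter.unusedSectionVars false

section Aux
variable {M : Type*} [MetricSpace M] {φ : ℝ → M → M} {ε : ℝ} {x y z : M}

lemma IsChainWith.eps_pos (h : IsChainWith φ dist ε x y) : 0 < ε := by
  obtain ⟨n, p, τ, hn, _, _, _, hd⟩ := h
  exact lt_of_le_of_lt dist_nonneg (hd 0 hn)

lemma IsChainWith.append (h : IsChainWith φ dist ε x y) {s : ℝ} (hs : 1 ≤ s)
    (hz : dist (φ s y) z < ε) : IsChainWith φ dist ε x z := by
  obtain ⟨n, p, τ, hn, hp0, hpn, hτ, hd⟩ := h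
  refine ⟨n + 1, fun i => if i = n + 1 then z else p i,
    fun i => if i = n then s else τ i, le_trans hn n.le_succ, ?_, ?_, ?_, ?_⟩
  · dsimp only; rw [if_neg (by omega)]; exact hp0
  · dsimp only; rw [if_pos rfl]
  · intro i hi
    dsimp only
    by_cases h' : i = n
    · rw [if_pos h']; exact hs
    · rw [if_neg h']; exact hτ i (by omega)
  · intro i hi
    dsimp only
    by_cases h' : i = n
    · subst h'
      rw [if_pos rfl, if_neg (by omega), if_pos rfl, hpn]
      exact hz
    · rw [if_neg h', if_neg (by omega), if_neg (by omega)]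
      exact hd i (by omega)

lemma IsChainWith.single (hφ1 : (0:ℝ) < ε) (x : M) :
    IsChainWith φ dist ε x (φ 1 x) := by
  refine ⟨1, fun i => if i = 0 then x else φ 1 x, fun _ => 1, le_refl 1, if_pos rfl,
    if_neg one_ne_zero, fun _ _ => le_refl 1, ?_⟩
  intro i hi
  interval_cases i
  simp [hφ1]

lemma IsChainWith.mono {ε' : ℝ} (h : IsChainWith φ dist ε x y) (hεε' : ε ≤ ε') :
    IsChainWith φ dist ε' x y := by
  obtain ⟨n, p, τ, hn, hp0, hpn, hτ, hd⟩ := h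
  exact ⟨n, p, τ, hn, hp0, hpn, hτ, fun i hi => lt_of_lt_of_le (hd i hi) hεε'⟩

end Aux

section Forward
variable {M : Type*} [MetricSpace M] [CompactSpace M]
variable (φ : ℝ → M → M)
variable (hφc : Continuous fun p : ℝ × M => φ p.1 p.2)
variable (hφ0 : ∀ x : M, φ 0 x = x)
variable (hφadd : ∀ (s t : ℝ) (x : M), φ (s + t) x = φ s (φ t x))

include hφc hφ0 hφadd

/-- Once `g ≥ c`, the orbit value stays `≥ c`, and is `> c` at positive times. -/
lemma orbit_stays
    {g : M → ℝ} {c : ℝ} {U : Set M} (hg : Continuous g) (hU : IsOpen U)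
    (hSU : g ⁻¹' {c} ⊆ U) (hincr : FlowStrictIncrOn φ g U)
    {x : M} (hx : c ≤ g x) :
    ∀ t, 0 ≤ t → c ≤ g (φ t x) ∧ (0 < t → c < g (φ t x)) := by
  have contOrb : Continuous fun u : ℝ => φ u x :=
    hφc.comp (continuous_id.prodMk continuous_const)
  have contF : Continuous fun u : ℝ => g (φ u x) := hg.comp contOrb
  set F : ℝ → ℝ := fun u => g (φ u x) with hF
  -- main claim: F ≥ c on [0, t]
  have key : ∀ t, 0 ≤ t → ∀ u, 0 ≤ u → u ≤ t → c ≤ F u := by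
    intro t ht
    set E : Set ℝ := {s | s ∈ Icc 0 t ∧ ∀ u ∈ Icc (0:ℝ) s, c ≤ F u} with hE
    have h0E : (0:ℝ) ∈ E := by
      refine ⟨⟨le_refl _, ht⟩, ?_⟩
      intro u hu
      have : u = 0 := le_antisymm hu.2 hu.1
      subst this
      simpa [F, hφ0 x] using hx
    have hne : E.Nonempty := ⟨0, h0E⟩
    have hbdd : BddAbove E := ⟨t, fun s hs => hs.1.2⟩
    set T := sSup E with hTdef
    have hT0 : 0 ≤ T := le_csSup hbdd h0E
    have hTt : T ≤ t := csSup_le hne fun s hs => hs.1.2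
    have hlt : ∀ u, 0 ≤ u → u < T → c ≤ F u := by
      intro u hu0 huT
      obtain ⟨s, hsE, hus⟩ := exists_lt_of_lt_csSup hne huT
      exact hsE.2 u ⟨hu0, le_of_lt hus⟩
    have hfT : c ≤ F T := by
      rcases eq_or_lt_of_le hT0 with h | h
      · rw [← h]; simpa [F, hφ0 x] using hx
      · have htend : Tendsto F (𝓝[<] T) (𝓝 (F T)) :=
          (contF.tendsto T).mono_left nhdsWithin_le_nhds
        refine ge_of_tendsto htend ?_
        filter_upwards [Ioo_mem_nhdsLT h]
          with u hu
        exact hlt u (le_of_lt hu.1) hu.2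
    have hTE : T ∈ E := by
      refine ⟨⟨hT0, hTt⟩, ?_⟩
      intro u hu
      rcases lt_or_eq_of_le hu.2 with h | h
      · exact hlt u hu.1 h
      · rw [h]; exact hfT
    have hTeqt : T = t := by
      by_contra hne'
      have hTlt : T < t := lt_of_le_of_ne hTt hne'
      -- in both cases we find δ' > 0 with T + δ' ∈ E
      have hstep : ∃ δ' > 0, T + δ' ∈ E := by
        rcases lt_or_eq_of_le hfT with hgt | heq
        · -- F T > c : use continuity
          have hV : IsOpen ((fun u : ℝ => F u) ⁻¹' Ioi c) := isOpen_Ioi.preimage contF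
          obtain ⟨δ, hδ0, hball⟩ := Metric.isOpen_iff.1 hV T hgt
          have hδ'0 : (0:ℝ) < min (δ/2) (t - T) := lt_min (by linarith) (by linarith)
          refine ⟨min (δ/2) (t - T), hδ'0, ⟨⟨by linarith, by
            have := min_le_right (δ/2) (t - T); linarith⟩, ?_⟩⟩
          intro u hu
          rcases le_or_gt u T with h' | h'
          · exact hTE.2 u ⟨hu.1, h'⟩
          · have : u ∈ ball T δ := by
              rw [mem_ball, Real.dist_eq, abs_of_pos (by linarith)]
              have h1 := hu.2
              have h2 := min_le_left (δ/2) (t - T)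
              linarith
            exact le_of_lt (hball this)
        · -- F T = c : the point is on the section, inside U
          have hmem : φ T x ∈ U := hSU (by simpa [F] using heq.symm)
          have hO : IsOpen ((fun u : ℝ => φ u x) ⁻¹' U) := hU.preimage contOrb
          obtain ⟨δ, hδ0, hball⟩ := Metric.isOpen_iff.1 hO T hmem
          set δ' := min (δ/2) (t - T) with hδ'
          have hδ'0 : 0 < δ' := lt_min (by linarith) (by linarith)
          have hseg : ∀ u ∈ Icc T (T + δ'), φ u x ∈ U := by
            intro u hu
            apply hball
            rw [mem_ball, Real.dist_eq, abs_of_nonneg (by linarith [hu.1])]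
            have h2 := min_le_left (δ/2) (t - T)
            have := hu.2
            linarith
          refine ⟨δ', hδ'0, ⟨⟨by linarith, by
            have := min_le_right (δ/2) (t - T); linarith⟩, ?_⟩⟩
          intro u hu
          rcases le_or_gt u T with h' | h'
          · exact hTE.2 u ⟨hu.1, h'⟩
          · have : F T < F u := by
              apply hincr x T u h'
              intro v hv
              exact hseg v ⟨hv.1, le_trans hv.2 hu.2⟩
            rw [heq]
            exact le_of_lt this
      obtain ⟨δ', hδ'0, hmem⟩ := hstep
      have := le_csSup hbdd hmem
      rw [← hTdef] at this
      linarith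
    intro u hu0 hut
    exact hTE.2 u ⟨hu0, by rw [hTeqt]; exact hut⟩
  intro t ht
  constructor
  · exact key t ht t ht (le_refl t)
  · intro htpos
    by_contra hle
    push_neg at hle
    have heq : F t = c := le_antisymm hle (key t ht t ht (le_refl t))
    have hmem : φ t x ∈ U := hSU (by simpa [F] using heq)
    have hO : IsOpen ((fun u : ℝ => φ u x) ⁻¹' U) := hU.preimage contOrb
    obtain ⟨δ, hδ0, hball⟩ := Metric.isOpen_iff.1 hO t hmem
    set δ' := min (δ/2) t with hδ'
    have hδ'0 : 0 < δ' := lt_min (by linarith) (by linarith)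
    have hseg : ∀ u ∈ Icc (t - δ') t, φ u x ∈ U := by
      intro u hu
      apply hball
      rw [mem_ball, Real.dist_eq, abs_of_nonpos (by linarith [hu.2])]
      have h2 := min_le_left (δ/2) t
      have := hu.1
      linarith
    have h1 : F (t - δ') < F t := hincr x (t - δ') t (by linarith) hseg
    have h2 : c ≤ F (t - δ') := by
      apply key t ht
      · have := min_le_right (δ/2) t; linarith
      · linarith
    rw [heq] at h1
    linarith

/-- Forward direction: a null-class level-set cross-section gives a
non-chain-recurrent point. -/
lemma not_chainRec_of_section
    {g : M → ℝ} {c : ℝ} {U : Set M} (hg : Continuous g) (hU : IsOpen U)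
    (hSU : g ⁻¹' {c} ⊆ U) (hincr : FlowStrictIncrOn φ g U)
    {x₀ : M} (hx₀ : g x₀ = c) : ¬ ChainRecPt φ x₀ := by
  intro hCR
  -- the compact set {g ≥ c}
  set K : Set M := {x | c ≤ g x} with hK
  have hKclosed : IsClosed K := isClosed_le continuous_const hg
  have hKcomp : IsCompact K := hKclosed.isCompact
  have hKne : K.Nonempty := ⟨x₀, le_of_eq hx₀.symm⟩
  have hstay := fun {x : M} (hx : c ≤ g x) => orbit_stays φ hφc hφ0 hφadd hg hU hSU hincr hx
  -- min of g (φ 1 x) - c on K is positive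
  obtain ⟨xm, hxmK, hxmmin⟩ := hKcomp.exists_isMinOn hKne
    (Continuous.continuousOn (hg.comp (hφc.comp (continuous_const.prodMk continuous_id))) :
      ContinuousOn (fun x => g (φ 1 x)) K)
  set δ := g (φ 1 xm) - c with hδ
  have hδ0 : 0 < δ := by
    have := ((hstay (show c ≤ g xm from hxmK)) 1 (by norm_num)).2 (by norm_num)
    simp only [hδ]
    linarith
  -- propagation: from K, after time ≥ 1, g ≥ c + δ
  have hprop : ∀ x ∈ K, ∀ t, 1 ≤ t → c + δ ≤ g (φ t x) := by
    intro x hx t ht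
    have h1 : φ t x = φ 1 (φ (t - 1) x) := by
      rw [← hφadd 1 (t-1) x]; norm_num
    have h2 : φ (t - 1) x ∈ K := ((hstay (show c ≤ g x from hx)) (t - 1) (by linarith)).1
    rw [h1]
    have := hxmmin h2
    simp only [Set.mem_setOf_eq] at this
    simp only [hδ]
    linarith
  -- uniform continuity of g
  obtain ⟨ε, hε0, hεδ⟩ := Metric.uniformContinuous_iff.1
    (CompactSpace.uniformContinuous_of_continuous hg) δ hδ0
  -- chain from x₀ to x₀
  obtain ⟨n, p, τ, hn, hp0, hpn, hτ, hd⟩ := hCR ε hε0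
  have hind : ∀ i ≤ n, c ≤ g (p i) := by
    intro i
    induction i with
    | zero => intro _; rw [hp0, hx₀]
    | succ j ih =>
      intro hj
      have hjn : j < n := by omega
      have h1 : c + δ ≤ g (φ (τ j) (p j)) := hprop _ (ih (by omega)) _ (hτ j hjn)
      have h2 : dist (g (φ (τ j) (p j))) (g (p (j+1))) < δ := hεδ (hd j hjn)
      rw [Real.dist_eq, abs_lt] at h2
      linarith
  -- final contradiction
  have hn1 : n - 1 < n := by omega
  have h1 : c + δ ≤ g (φ (τ (n-1)) (p (n-1))) :=
    hprop _ (hind (n-1) (by omega)) _ (hτ _ hn1)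
  have h2 : dist (g (φ (τ (n-1)) (p (n-1)))) (g (p (n-1+1))) < δ := hεδ (hd _ hn1)
  have h3 : n - 1 + 1 = n := by omega
  rw [h3] at h2
  rw [Real.dist_eq, abs_lt, hpn, hx₀] at h2
  linarith

end Forward

section Backward
variable {M : Type*} [MetricSpace M] [CompactSpace M] [ConnectedSpace M]
variable (φ : ℝ → M → M)
variable (hφc : Continuous fun p : ℝ × M => φ p.1 p.2)
variable (hφ0 : ∀ x : M, φ 0 x = x)
variable (hφadd : ∀ (s t : ℝ) (x : M), φ (s + t) x = φ s (φ t x))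

include hφc hφ0 hφadd

set_option maxHeartbeats 2000000 in
lemma section_of_not_chainRec (x₀ : M) (ε₀ : ℝ) (hε₀ : 0 < ε₀)
    (hx₀ : ¬ IsChainWith φ dist ε₀ x₀ x₀) :
    ∃ S : Set M, IsNullLevelSetCS φ S := by
  have cont_t : ∀ t : ℝ, Continuous fun y : M => φ t y := fun t =>
    hφc.comp (continuous_const.prodMk continuous_id)
  have hcomp : ∀ (a b : ℝ) (w : M), φ a (φ b w) = φ (a + b) w := fun a b w =>
    (hφadd a b w).symm
  -- the chain-reachable set from x₀
  set P : Set M := {y | IsChainWith φ dist ε₀ x₀ y} with hPdef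
  have hP_open : IsOpen P := by
    rw [Metric.isOpen_iff]
    rintro y ⟨n, p, τ, hn, hp0, hpn, hτ, hd⟩
    have hn1 : n - 1 < n := by omega
    have he : n - 1 + 1 = n := by omega
    have hdn : dist (φ (τ (n-1)) (p (n-1))) y < ε₀ := by
      have := hd (n-1) hn1
      rwa [he, hpn] at this
    refine ⟨ε₀ - dist (φ (τ (n-1)) (p (n-1))) y, by linarith, ?_⟩
    intro y' hy'
    rw [mem_ball] at hy'
    refine ⟨n, fun i => if i = n then y' else p i, τ, hn, ?_, ?_, hτ, ?_⟩
    · dsimp only; rw [if_neg (by omega)]; exact hp0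
    · dsimp only; rw [if_pos rfl]
    · intro i hi
      dsimp only
      rw [if_neg (by omega : ¬ i = n)]
      by_cases hin : i + 1 = n
      · rw [if_pos hin]
        have hi' : i = n - 1 := by omega
        subst hi'
        calc dist (φ (τ (n-1)) (p (n-1))) y' ≤
              dist (φ (τ (n-1)) (p (n-1))) y + dist y y' := dist_triangle _ _ _
          _ < ε₀ := by rw [dist_comm y y']; linarith
      · rw [if_neg hin]
        exact hd i hi
  have hP_flow : ∀ y ∈ P, ∀ s : ℝ, 1 ≤ s → φ s y ∈ P := by
    intro y hy s hs
    exact IsChainWith.append hy hs (by rw [dist_self]; exact hε₀)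
  have hPc_flow : ∀ y ∈ closure P, ∀ s : ℝ, 1 ≤ s → φ s y ∈ P := by
    intro y hy s hs
    obtain ⟨δ, hδ0, hδ⟩ := Metric.continuousAt_iff.1 ((cont_t s).continuousAt (x := y)) ε₀ hε₀
    obtain ⟨b, hbP, hby⟩ := Metric.mem_closure_iff.1 hy δ hδ0
    exact IsChainWith.append hbP hs (hδ (by rwa [dist_comm] at hby))
  -- the open "absorbing" set W
  set W : Set M := {y | ∃ t : ℝ, 0 ≤ t ∧ t ≤ 1 ∧ φ t y ∈ P} with hWdef
  have hW_open : IsOpen W := by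
    have : W = ⋃ t : Icc (0:ℝ) 1, (fun y => φ t.1 y) ⁻¹' P := by
      ext y
      simp only [mem_iUnion, mem_preimage, Subtype.exists, hWdef, mem_setOf_eq]
      constructor
      · rintro ⟨t, h0, h1, h⟩; exact ⟨t, ⟨h0, h1⟩, h⟩
      · rintro ⟨t, ⟨h0, h1⟩, h⟩; exact ⟨t, h0, h1, h⟩
    rw [this]
    exact isOpen_iUnion fun t => hP_open.preimage (cont_t t.1)
  have hPW : P ⊆ W := fun y hy => ⟨0, le_refl 0, zero_le_one, by rwa [hφ0 y]⟩
  have hW_fwd : ∀ y ∈ W, ∀ u : ℝ, 0 ≤ u → φ u y ∈ W := by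
    rintro y ⟨t, ht0, ht1, hyP⟩ u hu
    rcases le_or_gt u t with h | h
    · refine ⟨t - u, by linarith, by linarith, ?_⟩
      rw [hcomp (t - u) u y]
      have e : t - u + u = t := by ring
      rwa [e]
    · refine ⟨1, zero_le_one, le_refl 1, ?_⟩
      rw [hcomp 1 u y]
      have e : (1:ℝ) + u = (1 + u - t) + t := by ring
      rw [e, ← hcomp (1 + u - t) t y]
      exact hP_flow _ hyP _ (by linarith)
  have hWne : W.Nonempty := ⟨φ 1 x₀, hPW (IsChainWith.single hε₀ x₀)⟩
  -- a compact set containing the closure of W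
  set K : Set M := (fun q : ℝ × M => φ (-q.1) q.2) '' (Icc (0:ℝ) 1 ×ˢ closure P) with hKdef
  have hK_comp : IsCompact K := ((isCompact_Icc).prod (isClosed_closure.isCompact)).image
      (hφc.comp ((continuous_neg.comp continuous_fst).prodMk continuous_snd))
  have hWK : W ⊆ K := by
    rintro y ⟨t, ht0, ht1, hyP⟩
    refine ⟨(t, φ t y), ⟨⟨ht0, ht1⟩, subset_closure hyP⟩, ?_⟩
    dsimp only
    rw [hcomp (-t) t y]
    have e : -t + t = 0 := by ring
    rw [e, hφ0]
  have hclWK : closure W ⊆ K := closure_minimal hWK hK_comp.isClosed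
  have hK2 : ∀ y ∈ K, φ 2 y ∈ P := by
    rintro y ⟨⟨t, z⟩, ⟨⟨ht0, ht1⟩, hz⟩, rfl⟩
    dsimp only
    rw [hcomp 2 (-t) z]
    exact hPc_flow z hz _ (by linarith)
  have hclW_fwd : ∀ t : ℝ, 0 ≤ t → ∀ y ∈ closure W, φ t y ∈ closure W := by
    intro t ht y hy
    exact (Set.MapsTo.closure (fun z hz => hW_fwd z hz t ht) (cont_t t)) hy
  -- the attractor A
  set D : ℕ → Set M := fun n => (fun y => φ (n : ℝ) y) '' closure W with hDdef
  have hD_comp : ∀ n, IsCompact (D n) := fun n => (isClosed_closure.isCompact).image (cont_t _)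
  have hD_ne : ∀ n, (D n).Nonempty := fun n => (hWne.closure).image _
  have hD_succ : ∀ n : ℕ, D (n + 1) ⊆ D n := by
    intro n z hz
    obtain ⟨y, hy, rfl⟩ := hz
    refine ⟨φ 1 y, hclW_fwd 1 zero_le_one y hy, ?_⟩
    dsimp only
    rw [hcomp (n:ℝ) 1 y]
    have e : ((n:ℝ) + 1) = (((n + 1 : ℕ)) : ℝ) := by push_cast; ring
    rw [e]
  set A : Set M := ⋂ n, D n with hAdef
  have hA_ne : A.Nonempty :=
    IsCompact.nonempty_iInter_of_sequence_nonempty_isCompact_isClosed D hD_succ hD_ne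
      (hD_comp 0) (fun n => (hD_comp n).isClosed)
  have hA_closed : IsClosed A := isClosed_iInter fun n => (hD_comp n).isClosed
  have hA_P : A ⊆ P := by
    intro a ha
    have h2 : a ∈ D 2 := mem_iInter.1 ha 2
    obtain ⟨y, hy, rfl⟩ := h2
    have e : ((2:ℕ):ℝ) = (2:ℝ) := by norm_num
    dsimp only
    rw [e]
    exact hK2 y (hclWK hy)
  have hA_fwd : ∀ t : ℝ, 0 ≤ t → ∀ a ∈ A, φ t a ∈ A := by
    intro t ht a ha
    refine mem_iInter.2 fun n => ?_
    obtain ⟨y, hy, rfl⟩ := mem_iInter.1 ha n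
    refine ⟨φ t y, hclW_fwd t ht y hy, ?_⟩
    dsimp only
    rw [hcomp (n:ℝ) t y, hcomp t (n:ℝ) y]
    have e : (n:ℝ) + t = t + (n:ℝ) := by ring
    rw [e]
  -- attraction
  have hAttract : ∀ O : Set M, IsOpen O → A ⊆ O → ∃ N : ℕ, D N ⊆ O := by
    intro O hO hAO
    by_contra h
    push_neg at h
    have hC : ∀ n, (D n ∩ Oᶜ).Nonempty := by
      intro n
      obtain ⟨z, hz1, hz2⟩ := not_subset.1 (h n)
      exact ⟨z, hz1, hz2⟩
    have hnon := IsCompact.nonempty_iInter_of_sequence_nonempty_isCompact_isClosed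
      (fun n => D n ∩ Oᶜ) (fun n => inter_subset_inter_left _ (hD_succ n)) hC
      ((hD_comp 0).inter_right (isClosed_compl_iff.2 hO))
      (fun n => ((hD_comp n).isClosed).inter (isClosed_compl_iff.2 hO))
    obtain ⟨z, hz⟩ := hnon
    rw [mem_iInter] at hz
    have hzA : z ∈ A := mem_iInter.2 fun n => (hz n).1
    exact (hz 0).2 (hAO hzA)
  -- the dual repeller
  set Astar : Set M := {y | ∀ t : ℝ, 0 ≤ t → φ t y ∉ W} with hAstardef
  have hAstar_closed : IsClosed Astar := by
    have : Astar = ⋂ t : {s : ℝ // 0 ≤ s}, (fun y => φ t.1 y) ⁻¹' Wᶜ := by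
      ext y
      simp only [mem_iInter, mem_preimage, mem_compl_iff, Subtype.forall, hAstardef,
        mem_setOf_eq]
    rw [this]
    exact isClosed_iInter fun t => (isClosed_compl_iff.2 hW_open).preimage (cont_t t.1)
  have hAstar_fwd : ∀ y ∈ Astar, ∀ d : ℝ, 0 ≤ d → φ d y ∈ Astar := by
    intro y hy d hd t ht
    rw [hcomp t d y]
    exact hy (t + d) (by linarith)
  have hAAstar : ∀ a ∈ A, a ∉ Astar := by
    intro a ha hastar
    have h1 : a ∈ W := hPW (hA_P ha)
    have h2 := hastar 0 (le_refl 0)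
    rw [hφ0] at h2
    exact h2 h1
  have hAstar_ne : Astar.Nonempty := by
    by_contra h
    rw [Set.not_nonempty_iff_eq_empty] at h
    have hcov : ∀ y : M, ∃ t : ℝ, 0 ≤ t ∧ φ t y ∈ W := by
      intro y
      have hy : y ∉ Astar := by rw [h]; exact notMem_empty y
      rw [hAstardef, mem_setOf_eq] at hy
      push_neg at hy
      obtain ⟨t, ht, hW'⟩ := hy
      exact ⟨t, ht, hW'⟩
    have hcover : (univ : Set M) ⊆ ⋃ t : {s : ℝ // 0 ≤ s}, (fun y => φ t.1 y) ⁻¹' W := by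
      intro y _
      obtain ⟨t, ht, hw⟩ := hcov y
      exact mem_iUnion.2 ⟨⟨t, ht⟩, hw⟩
    obtain ⟨F, hF⟩ := isCompact_univ.elim_finite_subcover _
      (fun t : {s : ℝ // 0 ≤ s} => hW_open.preimage (cont_t t.1)) hcover
    set T : ℕ := F.sup fun t => ⌈t.1⌉₊ with hTdef
    have hTbound : ∀ t ∈ F, (t : {s : ℝ // 0 ≤ s}).1 ≤ (T : ℝ) := by
      intro t htF
      calc t.1 ≤ (⌈t.1⌉₊ : ℝ) := Nat.le_ceil _
        _ ≤ (T : ℝ) := by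
          have h := Finset.le_sup (f := fun t : {s : ℝ // 0 ≤ s} => ⌈t.1⌉₊) htF
          rw [hTdef]
          exact_mod_cast h
    have hTW : ∀ y : M, φ (T : ℝ) y ∈ W := by
      intro y
      obtain ⟨t, htF, hyt⟩ := mem_iUnion₂.1 (hF (mem_univ y))
      have e : φ (T:ℝ) y = φ ((T:ℝ) - t.1) (φ t.1 y) := by
        rw [hcomp ((T:ℝ) - t.1) t.1 y]
        congr 1; ring
      rw [e]
      exact hW_fwd _ hyt _ (by linarith [hTbound t htF])
    have h1 : φ (T:ℝ) (φ (-((T:ℝ)+3)) x₀) ∈ W := hTW _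
    obtain ⟨s', hs'0, hs'1, hs'P⟩ := h1
    have h2 : φ s' (φ (T:ℝ) (φ (-((T:ℝ)+3)) x₀)) = φ (s' - 3) x₀ := by
      rw [hcomp (T:ℝ) (-((T:ℝ)+3)) x₀, hcomp s' ((T:ℝ) + -((T:ℝ)+3)) x₀]
      congr 1; ring
    rw [h2] at hs'P
    have hchain : IsChainWith φ dist ε₀ x₀ (φ (s' - 3) x₀) := hs'P
    refine hx₀ (hchain.append (s := 3 - s') (by linarith) ?_)
    rw [hcomp (3 - s') (s' - 3) x₀]
    have e : 3 - s' + (s' - 3) = 0 := by ring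
    rw [e, hφ0, dist_self]
    exact hε₀
  -- the Conley functions
  have hden : ∀ y : M, 0 < infDist y A + infDist y Astar := by
    intro y
    rcases lt_or_eq_of_le (add_nonneg (infDist_nonneg (s := A) (x := y))
      (infDist_nonneg (s := Astar) (x := y))) with h | h
    · exact h
    · exfalso
      have h1 : infDist y A = 0 := by
        have := infDist_nonneg (s := A) (x := y)
        have := infDist_nonneg (s := Astar) (x := y)
        linarith
      have h2 : infDist y Astar = 0 := by
        have := infDist_nonneg (s := A) (x := y)
        have := infDist_nonneg (s := Astar) (x := y)
        linarith
      exact hAAstar y ((hA_closed.mem_iff_infDist_zero hA_ne).2 h1)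
        ((hAstar_closed.mem_iff_infDist_zero hAstar_ne).2 h2)
  set l : M → ℝ := fun y => infDist y A / (infDist y A + infDist y Astar) with hldef
  have hl_cont : Continuous l := (continuous_infDist_pt A).div
      ((continuous_infDist_pt A).add (continuous_infDist_pt Astar)) (fun y => (hden y).ne')
  have hl_nonneg : ∀ y, 0 ≤ l y := fun y => div_nonneg infDist_nonneg (hden y).le
  have hl_le_one : ∀ y, l y ≤ 1 := by
    intro y
    rw [hldef]
    dsimp only
    rw [div_le_one (hden y)]
    have : (0:ℝ) ≤ infDist y Astar := infDist_nonneg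
    linarith
  have hl_A : ∀ a ∈ A, l a = 0 := by
    intro a ha
    rw [hldef]
    dsimp only
    rw [infDist_zero_of_mem ha, zero_div]
  have hl_Astar : ∀ y ∈ Astar, l y = 1 := by
    intro y hy
    have h1 : infDist y Astar = 0 := infDist_zero_of_mem hy
    have h2 : infDist y A ≠ 0 := by
      intro h0
      exact hAAstar y ((hA_closed.mem_iff_infDist_zero hA_ne).2 h0) hy
    rw [hldef]
    dsimp only
    rw [h1, add_zero, div_self h2]
  set k : M → ℝ := fun y => sSup ((fun t : ℝ => l (φ t y)) '' Ici 0) with hkdef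
  have hSne : ∀ y : M, ((fun t : ℝ => l (φ t y)) '' Ici 0).Nonempty :=
    fun y => ⟨l (φ 0 y), 0, self_mem_Ici, rfl⟩
  have hSbdd : ∀ y : M, BddAbove ((fun t : ℝ => l (φ t y)) '' Ici 0) := by
    intro y
    refine ⟨1, ?_⟩
    rintro r ⟨t, ht, rfl⟩
    exact hl_le_one _
  have hk_ge : ∀ y, ∀ t : ℝ, 0 ≤ t → l (φ t y) ≤ k y :=
    fun y t ht => le_csSup (hSbdd y) ⟨t, ht, rfl⟩
  have hk_le : ∀ y (b : ℝ), (∀ t : ℝ, 0 ≤ t → l (φ t y) ≤ b) → k y ≤ b := by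
    intro y b hb
    refine csSup_le (hSne y) ?_
    rintro r ⟨t, ht, rfl⟩
    exact hb t ht
  have hk_y : ∀ y, l y ≤ k y := by
    intro y
    have := hk_ge y 0 (le_refl 0)
    rwa [hφ0] at this
  have hk_nonneg : ∀ y, 0 ≤ k y := fun y => le_trans (hl_nonneg y) (hk_y y)
  have hk_le_one : ∀ y, k y ≤ 1 := fun y => hk_le y 1 fun t ht => hl_le_one _
  have hk_mono : ∀ y, ∀ d : ℝ, 0 ≤ d → k (φ d y) ≤ k y := by
    intro y d hd
    refine hk_le _ _ fun t ht => ?_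
    rw [hcomp t d y]
    exact hk_ge y (t + d) (by linarith)
  have hk_A : ∀ a ∈ A, k a = 0 := by
    intro a ha
    exact le_antisymm (hk_le _ _ fun t ht => le_of_eq (hl_A _ (hA_fwd t ht a ha)))
      (hk_nonneg a)
  have hk_Astar : ∀ y ∈ Astar, k y = 1 :=
    fun y hy => le_antisymm (hk_le_one y) (le_trans (le_of_eq (hl_Astar y hy).symm) (hk_y y))
  have hk_pos : ∀ y, y ∉ A → 0 < k y := by
    intro y hy
    have h1 : 0 < infDist y A := by
      rcases lt_or_eq_of_le (infDist_nonneg (s := A) (x := y)) with h | h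
      · exact h
      · exact absurd ((hA_closed.mem_iff_infDist_zero hA_ne).2 h.symm) hy
    have h2 : 0 < l y := div_pos h1 (hden y)
    exact lt_of_lt_of_le h2 (hk_y y)
  -- values of l far along orbits from closure W are small
  have htail : ∀ η : ℝ, 0 < η → ∃ N : ℕ, ∀ y ∈ closure W, ∀ r : ℝ, (N:ℝ) ≤ r →
      l (φ r y) < η := by
    intro η hη
    obtain ⟨N, hN⟩ := hAttract (l ⁻¹' Iio η) (isOpen_Iio.preimage hl_cont) (fun a ha => by
      rw [mem_preimage, mem_Iio, hl_A a ha]; exact hη)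
    refine ⟨N, fun y hy r hr => ?_⟩
    have hmem : φ r y ∈ D N := by
      refine ⟨φ (r - N) y, hclW_fwd _ (by
        have : (0:ℝ) ≤ (N:ℝ) := Nat.cast_nonneg N
        linarith) y hy, ?_⟩
      dsimp only
      rw [hcomp (N:ℝ) (r - (N:ℝ)) y]
      congr 1; ring
    exact hN hmem
  have hk_tail : ∀ y : M, (∃ t₀ : ℝ, 0 ≤ t₀ ∧ φ t₀ y ∈ W) → ∀ η : ℝ, 0 < η →
      ∃ T : ℝ, 0 ≤ T ∧ ∀ r, T ≤ r → k (φ r y) ≤ η := by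
    rintro y ⟨t₀, ht₀, hW'⟩ η hη
    obtain ⟨N, hN⟩ := htail η hη
    refine ⟨t₀ + N, by positivity, fun r hr => ?_⟩
    refine hk_le _ _ fun t ht => ?_
    have e : φ t (φ r y) = φ (t + r - t₀) (φ t₀ y) := by
      rw [hcomp t r y, hcomp (t + r - t₀) t₀ y]
      congr 1; ring
    rw [e]
    exact le_of_lt (hN _ (subset_closure hW') _ (by linarith))
  -- continuity of k
  have hk_cont : Continuous k := by
    rw [continuous_iff_continuousAt]
    intro y
    rw [Metric.continuousAt_iff]
    intro ε hε
    have hlow : ∃ δ₁ > 0, ∀ z : M, dist z y < δ₁ → k y - ε < k z := by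
      obtain ⟨r, ⟨t₁, ht₁, rfl⟩, hr⟩ := exists_lt_of_lt_csSup (hSne y)
        (show k y - ε/2 < k y by linarith)
      have hc : ContinuousAt (fun z => l (φ t₁ z)) y :=
        (hl_cont.comp (cont_t t₁)).continuousAt
      obtain ⟨δ₁, hδ₁, hδ⟩ := Metric.continuousAt_iff.1 hc (l (φ t₁ y) - (k y - ε/2))
        (by linarith)
      refine ⟨δ₁, hδ₁, fun z hz => ?_⟩
      have h1 := hδ hz
      rw [Real.dist_eq, abs_lt] at h1
      have h3 := hk_ge z t₁ ht₁
      linarith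
    have hupp : ∃ δ₂ > 0, ∀ z : M, dist z y < δ₂ → k z < k y + ε := by
      by_cases hyA : y ∈ Astar
      · refine ⟨1, one_pos, fun z hz => ?_⟩
        have h1 := hk_le_one z
        have h2 := hk_Astar y hyA
        rw [h2]
        linarith
      · have hyW : ∃ t₀ : ℝ, 0 ≤ t₀ ∧ φ t₀ y ∈ W := by
          rw [hAstardef, mem_setOf_eq] at hyA
          push_neg at hyA
          exact hyA
        obtain ⟨t₀, ht₀, ht₀W⟩ := hyW
        obtain ⟨N, hN⟩ := htail (ε/2) (by linarith)
        set T : ℝ := t₀ + N with hTdef2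
        have hT0 : 0 ≤ T := by positivity
        have hWpre : IsOpen ((fun z : M => φ t₀ z) ⁻¹' W) := hW_open.preimage (cont_t t₀)
        obtain ⟨δw, hδw, hballw⟩ := Metric.isOpen_iff.1 hWpre y ht₀W
        have hΦc : Continuous fun q : ℝ × M => l (φ q.1 q.2) := hl_cont.comp hφc
        have hcpt : IsCompact ((Icc (0:ℝ) T) ×ˢ (univ : Set M)) :=
          isCompact_Icc.prod isCompact_univ
        have huc := IsCompact.uniformContinuousOn_of_continuous hcpt hΦc.continuousOn
        obtain ⟨δ₃, hδ₃0, hδ₃⟩ := uniformContinuousOn_iff.1 huc (ε/2) (by linarith)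
        refine ⟨min δw δ₃, lt_min hδw hδ₃0, fun z hz => ?_⟩
        have hzw : dist z y < δw := lt_of_lt_of_le hz (min_le_left _ _)
        have hz3 : dist z y < δ₃ := lt_of_lt_of_le hz (min_le_right _ _)
        have hzW : φ t₀ z ∈ W := hballw (by rwa [mem_ball])
        have hbound : ∀ t : ℝ, 0 ≤ t → l (φ t z) ≤ k y + ε/2 := by
          intro t ht
          rcases le_or_gt t T with hle | hgt
          · have hmem1 : ((t, z) : ℝ × M) ∈ Icc (0:ℝ) T ×ˢ (univ : Set M) :=
              ⟨⟨ht, hle⟩, mem_univ _⟩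
            have hmem2 : ((t, y) : ℝ × M) ∈ Icc (0:ℝ) T ×ˢ (univ : Set M) :=
              ⟨⟨ht, hle⟩, mem_univ _⟩
            have hdp : dist ((t,z) : ℝ × M) ((t,y) : ℝ × M) < δ₃ := by
              rw [Prod.dist_eq]
              simp only [dist_self]
              rw [max_eq_right dist_nonneg]
              exact hz3
            have h4 := hδ₃ _ hmem1 _ hmem2 hdp
            rw [Real.dist_eq, abs_lt] at h4
            dsimp only at h4
            have h5 := hk_ge y t ht
            linarith
          · have e : φ t z = φ (t - t₀) (φ t₀ z) := by
              rw [hcomp (t - t₀) t₀ z]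
              congr 1; ring
            rw [e]
            have h6 := hN _ (subset_closure hzW) (t - t₀) (by
              rw [hTdef2] at hgt; linarith)
            have h0 := hk_nonneg y
            linarith
        have hfin : k z ≤ k y + ε/2 := hk_le _ _ hbound
        linarith
    obtain ⟨δ₁, hδ₁, h₁⟩ := hlow
    obtain ⟨δ₂, hδ₂, h₂⟩ := hupp
    refine ⟨min δ₁ δ₂, lt_min hδ₁ hδ₂, ?_⟩
    intro z hz
    have l1 := h₁ z (lt_of_lt_of_le hz (min_le_left _ _))
    have l2 := h₂ z (lt_of_lt_of_le hz (min_le_right _ _))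
    rw [Real.dist_eq, abs_lt]
    constructor <;> linarith
  -- enumeration of nonnegative rationals
  set tn : ℕ → ℝ := fun n => ((Nat.unpair n).1 : ℝ) / (((Nat.unpair n).2 : ℝ) + 1) with htndef
  have htn_nonneg : ∀ n, 0 ≤ tn n := fun n => div_nonneg (Nat.cast_nonneg _) (by positivity)
  have htn_dense : ∀ u η : ℝ, 0 ≤ u → 0 < η → ∃ n, u < tn n ∧ tn n < u + η := by
    intro u η hu hη
    obtain ⟨q, hq1, hq2⟩ := exists_rat_btwn (show u < u + η by linarith)
    have hq0 : 0 < q := by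
      have h : (0:ℝ) < (q:ℝ) := lt_of_le_of_lt hu hq1
      exact_mod_cast h
    have hnum : (0:ℤ) ≤ q.num := le_of_lt (Rat.num_pos.2 hq0)
    have he : tn (Nat.pair q.num.toNat (q.den - 1)) = (q : ℝ) := by
      rw [htndef]
      dsimp only
      rw [Nat.unpair_pair]
      dsimp only
      have h1 : ((q.num.toNat : ℕ) : ℝ) = ((q.num : ℤ) : ℝ) := by
        exact_mod_cast congrArg (Int.cast : ℤ → ℝ) (Int.toNat_of_nonneg hnum)
      have h2 : ((q.den - 1 : ℕ) : ℝ) + 1 = (q.den : ℝ) := by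
        have h3 : q.den - 1 + 1 = q.den := Nat.succ_pred_eq_of_pos q.pos
        exact_mod_cast h3
      rw [h1, h2, ← Rat.cast_def]
    exact ⟨Nat.pair q.num.toNat (q.den - 1), by rw [he]; exact hq1, by rw [he]; exact hq2⟩
  -- the Lyapunov function g
  set gfun : M → ℝ := fun y => ∑' n : ℕ, (1/2 : ℝ)^n * k (φ (tn n) y) with hgdef
  have hterm_bound : ∀ (n : ℕ) (y : M), ‖(1/2 : ℝ)^n * k (φ (tn n) y)‖ ≤ (1/2:ℝ)^n := by
    intro n y
    rw [Real.norm_eq_abs, abs_mul, abs_of_nonneg (by positivity : (0:ℝ) ≤ (1/2:ℝ)^n),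
      abs_of_nonneg (hk_nonneg _)]
    calc (1/2:ℝ)^n * k (φ (tn n) y) ≤ (1/2:ℝ)^n * 1 :=
        mul_le_mul_of_nonneg_left (hk_le_one _) (by positivity)
      _ = (1/2:ℝ)^n := mul_one _
  have hsummable : ∀ y : M, Summable fun n : ℕ => (1/2:ℝ)^n * k (φ (tn n) y) := by
    intro y
    exact Summable.of_norm_bounded summable_geometric_two (fun n => hterm_bound n y)
  have hg_cont : Continuous gfun :=
    continuous_tsum (fun n => continuous_const.mul (hk_cont.comp (cont_t (tn n))))
      summable_geometric_two (fun n y => hterm_bound n y)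
  have hg_A : ∀ a ∈ A, gfun a = 0 := by
    intro a ha
    rw [hgdef]
    dsimp only
    have hzero : ∀ n : ℕ, (1/2:ℝ)^n * k (φ (tn n) a) = 0 := fun n => by
      rw [hk_A _ (hA_fwd _ (htn_nonneg n) a ha), mul_zero]
    rw [tsum_congr hzero, tsum_zero]
  have hg_Astar : ∀ y ∈ Astar, gfun y = 2 := by
    intro y hy
    rw [hgdef]
    dsimp only
    have hone : ∀ n : ℕ, (1/2:ℝ)^n * k (φ (tn n) y) = (1/2:ℝ)^n := fun n => by
      rw [hk_Astar _ (hAstar_fwd y hy _ (htn_nonneg n)), mul_one]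
    rw [tsum_congr hone, tsum_geometric_two]
  -- strict decrease along the flow outside A ∪ Astar
  have hg_strict : ∀ (x : M) (s s' : ℝ), s < s' → φ s x ∉ A → φ s x ∉ Astar →
      gfun (φ s' x) < gfun (φ s x) := by
    intro x s s' hss' hA' hAstar'
    set y := φ s x with hy
    set d := s' - s with hd'
    have hd0 : 0 < d := by rw [hd']; linarith
    have hstep1 : ∃ u : ℝ, 0 ≤ u ∧ k (φ (u + d) y) < k (φ u y) := by
      by_contra hcon
      push_neg at hcon
      have heq : ∀ u : ℝ, 0 ≤ u → k (φ (u + d) y) = k (φ u y) := by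
        intro u hu
        refine le_antisymm ?_ (hcon u hu)
        have e : φ (u + d) y = φ d (φ u y) := by
          rw [hcomp d u y]
          congr 1; ring
        rw [e]
        exact hk_mono _ d hd0.le
      have hiter : ∀ n : ℕ, k (φ ((n:ℝ) * d) y) = k y := by
        intro n
        induction n with
        | zero => norm_num [hφ0]
        | succ m ih =>
          have e : (((m+1 : ℕ)) : ℝ) * d = ((m:ℝ) * d) + d := by push_cast; ring
          rw [e]
          rw [heq ((m:ℝ)*d) (by positivity)]
          exact ih
      have hyW : ∃ t₀ : ℝ, 0 ≤ t₀ ∧ φ t₀ y ∈ W := by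
        rw [hAstardef, mem_setOf_eq] at hAstar'
        push_neg at hAstar'
        exact hAstar'
      have hky : 0 < k y := hk_pos y hA'
      obtain ⟨T, hT0, hT⟩ := hk_tail y hyW (k y / 2) (by linarith)
      obtain ⟨n, hn⟩ := exists_nat_ge (T / d)
      have hnd : T ≤ (n:ℝ) * d := (div_le_iff₀ hd0).1 hn
      have := hT ((n:ℝ) * d) hnd
      rw [hiter n] at this
      linarith
    obtain ⟨u, hu0, hulf⟩ := hstep1
    have hc1 : Continuous fun t : ℝ => k (φ (t + s) x) :=
      hk_cont.comp (hφc.comp ((continuous_id.add continuous_const).prodMk continuous_const))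
    have hc2 : Continuous fun t : ℝ => k (φ (t + s') x) :=
      hk_cont.comp (hφc.comp ((continuous_id.add continuous_const).prodMk continuous_const))
    have hFc : Continuous fun t : ℝ => k (φ (t + s) x) - k (φ (t + s') x) := hc1.sub hc2
    have hFu : 0 < k (φ (u + s) x) - k (φ (u + s') x) := by
      have e1 : φ (u + s) x = φ u y := by rw [hy, hcomp u s x]
      have e2 : φ (u + s') x = φ (u + d) y := by
        rw [hy, hcomp (u + d) s x]
        congr 1
        rw [hd']; ring
      rw [e1, e2]
      linarith
    have hopen2 : IsOpen {t : ℝ | 0 < k (φ (t + s) x) - k (φ (t + s') x)} :=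
      isOpen_lt continuous_const hFc
    obtain ⟨η, hη0, hball⟩ := Metric.isOpen_iff.1 hopen2 u hFu
    obtain ⟨n₀, hn₀1, hn₀2⟩ := htn_dense u η hu0 hη0
    have hn₀mem : tn n₀ ∈ ball u η := by
      rw [mem_ball, Real.dist_eq, abs_of_pos (by linarith)]
      linarith
    have hpos := hball hn₀mem
    rw [mem_setOf_eq] at hpos
    have hle : ∀ n : ℕ, (1/2:ℝ)^n * k (φ (tn n) (φ s' x)) ≤
        (1/2:ℝ)^n * k (φ (tn n) (φ s x)) := by
      intro n
      refine mul_le_mul_of_nonneg_left ?_ (by positivity)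
      have e1 : φ (tn n) (φ s' x) = φ d (φ (tn n) (φ s x)) := by
        rw [hcomp (tn n) s' x, hcomp (tn n) s x, hcomp d (tn n + s) x]
        congr 1
        rw [hd']; ring
      rw [e1]
      exact hk_mono _ d hd0.le
    have hlt : (1/2:ℝ)^n₀ * k (φ (tn n₀) (φ s' x)) <
        (1/2:ℝ)^n₀ * k (φ (tn n₀) (φ s x)) := by
      refine mul_lt_mul_of_pos_left ?_ (by positivity)
      rw [hcomp (tn n₀) s' x, hcomp (tn n₀) s x]
      linarith
    rw [hgdef]
    dsimp only
    exact Summable.tsum_lt_tsum hle hlt (hsummable _) (hsummable _)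
  -- assemble the cross-section
  have hIVT : ∃ y : M, gfun y = 1 := by
    obtain ⟨a, ha⟩ := hA_ne
    obtain ⟨b, hb⟩ := hAstar_ne
    have hsub := intermediate_value_univ a b hg_cont
    have h1 : (1:ℝ) ∈ Icc (gfun a) (gfun b) := by
      rw [hg_A a ha, hg_Astar b hb]
      exact ⟨by norm_num, by norm_num⟩
    exact hsub h1
  obtain ⟨y₁, hy₁⟩ := hIVT
  refine ⟨(fun y => -gfun y) ⁻¹' {(-1 : ℝ)}, ⟨⟨y₁, by simp [hy₁]⟩,
    (fun y => -gfun y), -1, (A ∪ Astar)ᶜ, hg_cont.neg, rfl,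
    (hA_closed.union hAstar_closed).isOpen_compl, ?_, ?_⟩⟩
  · intro z hz
    simp only [mem_preimage, mem_singleton_iff, neg_eq_iff_eq_neg, neg_neg] at hz
    rw [mem_compl_iff, mem_union]
    rintro (h | h)
    · rw [hg_A z h] at hz; norm_num at hz
    · rw [hg_Astar z h] at hz; norm_num at hz
  · intro x s s' hss' hseg
    have hs_mem : φ s x ∈ (A ∪ Astar)ᶜ := hseg s ⟨le_refl s, hss'.le⟩
    rw [mem_compl_iff, mem_union] at hs_mem
    push_neg at hs_mem
    have := hg_strict x s s' hss' hs_mem.1 hs_mem.2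
    simp only [neg_lt_neg_iff]
    linarith

end Backward

/-- **Existence of null-cohomologous partial cross-sections.**
Let `M` be a compact connected metric space with a continuous flow `φ`. Then `φ` admits
a null-class level-set cross-section if and only if `φ` is not chain recurrent. -/
theorem exists_nullCrossSection_iff_not_chainRecurrent
    {M : Type*} [MetricSpace M] [CompactSpace M] [ConnectedSpace M]
    (φ : ℝ → M → M)
    (hφc : Continuous fun p : ℝ × M => φ p.1 p.2)
    (hφ0 : ∀ x : M, φ 0 x = x)
    (hφadd : ∀ (s t : ℝ) (x : M), φ (s + t) x = φ s (φ t x)) :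
    (∃ S : Set M, IsNullLevelSetCS φ S) ↔ ¬ (∀ x : M, ChainRecPt φ x) := by
  constructor
  · rintro ⟨S, hSne, g, c, U, hg, hSeq, hU, hSU, hincr⟩ hall
    subst hSeq
    obtain ⟨x₁, hx₁⟩ := hSne
    exact not_chainRec_of_section φ hφc hφ0 hφadd hg hU hSU hincr hx₁ (hall x₁)
  · intro h
    rw [not_forall] at h
    obtain ⟨x₀, hx₀⟩ := h
    rw [ChainRecPt] at hx₀
    push_neg at hx₀
    obtain ⟨ε₀, hε₀, hchain⟩ := hx₀
    exact section_of_not_chainRec φ hφc hφ0 hφadd x₀ ε₀ hε₀ hchain
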